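/- Suppose (u₁, u₂) solves system (5) on an open interval I with u₁(t) > 0 and u₂(t) > 0 for all t ∈ I, and let c = u₁(t₀)u₂(t₀)(u₁(t₀)+u₂(t₀)) for some t₀ ∈ I (this value being independent of t₀). Then for all t ∈ I: u₁'(t) = √(u₁(t)(u₁(t)³ + 4c)) and u₂'(t) = −√(u₂(t)(u₂(t)³ + 4c)). -/

import Mathlib

theorem system5_elliptic_form (a b : ℝ) (u₁ u₂ : ℝ → ℝ)
    (h₁ : ∀ t ∈ Set.Ioo a b, HasDerivAt u₁ (u₁ t * (u₁ t + 2 * u₂ t)) t)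
    (h₂ : ∀ t ∈ Set.Ioo a b, HasDerivAt u₂ (-(u₂ t * (2 * u₁ t + u₂ t))) t)
    (hpos₁ : ∀ t ∈ Set.Ioo a b, 0 < u₁ t)
    (hpos₂ : ∀ t ∈ Set.Ioo a b, 0 < u₂ t)
    (t₀ : ℝ) (ht₀ : t₀ ∈ Set.Ioo a b) (c : ℝ)
    (hc : c = u₁ t₀ * u₂ t₀ * (u₁ t₀ + u₂ t₀)) :
    ∀ t ∈ Set.Ioo a b,
      HasDerivAt u₁ (Real.sqrt (u₁ t * (u₁ t ^ 3 + 4 * c))) t ∧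
      HasDerivAt u₂ (-Real.sqrt (u₂ t * (u₂ t ^ 3 + 4 * c))) t := by
  set F : ℝ → ℝ := fun t => u₁ t * u₂ t * (u₁ t + u₂ t) with hF
  have hF' : ∀ t ∈ Set.Ioo a b, HasDerivAt F 0 t := by
    intro t ht
    have := (((h₁ t ht).mul (h₂ t ht)).mul ((h₁ t ht).add (h₂ t ht)))
    convert this using 1
    case e'_9 => simp only [Pi.mul_apply, Pi.add_apply]; ring
    all_goals rfl
  have hconst : ∀ t ∈ Set.Ioo a b, F t = c := by
    intro t ht
    rw [hc]
    exact (convex_Ioo a b).is_const_of_fderivWithin_eq_zero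
      (fun s hs => ((hF' s hs).differentiableAt).differentiableWithinAt)
      (fun s hs => by
        rw [fderivWithin_of_isOpen isOpen_Ioo hs, (hF' s hs).hasFDerivAt.fderiv]
        ext; simp) ht ht₀
  intro t ht
  have hct : c = u₁ t * u₂ t * (u₁ t + u₂ t) := (hconst t ht).symm
  have e1 : Real.sqrt (u₁ t * (u₁ t ^ 3 + 4 * c)) = u₁ t * (u₁ t + 2 * u₂ t) := by
    have : u₁ t * (u₁ t ^ 3 + 4 * c) = (u₁ t * (u₁ t + 2 * u₂ t)) ^ 2 := by
      rw [hct]; ring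
    have p1 := hpos₁ t ht; have p2 := hpos₂ t ht
    rw [this, Real.sqrt_sq (by positivity)]
  have e2 : Real.sqrt (u₂ t * (u₂ t ^ 3 + 4 * c)) = u₂ t * (2 * u₁ t + u₂ t) := by
    have : u₂ t * (u₂ t ^ 3 + 4 * c) = (u₂ t * (2 * u₁ t + u₂ t)) ^ 2 := by
      rw [hct]; ring
    have p1 := hpos₁ t ht; have p2 := hpos₂ t ht
    rw [this, Real.sqrt_sq (by positivity)]
  refine ⟨e1 ▸ h₁ t ht, ?_⟩
  rw [e2]
  exact h₂ t ht
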